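/- Let H be a finite simple graph and k a positive integer. Then ūbox(H) ≤ k if and only if there exist positive integers d_1, …, d_k and, for each vertex v and each i ∈ {1,…,k}, a box B_i(v) = J_{i,1}(v) × ⋯ × J_{i,d_i}(v) ⊆ ℝ^{d_i}, where each factor J_{i,j}(v) is either all of ℝ or a nonempty closed interval and for each i at most one of the factors J_{i,1}(v), …, J_{i,d_i}(v) is different from ℝ, such that two distinct vertices u, v are adjacent in H if and only if B_i(u) ∩ B_i(v) ≠ ∅ for every i ∈ {1,…,k}. -/

import Mathlib

universe u

/-- A graph is an interval graph if its vertices can be assigned nonempty closed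
intervals of `ℝ` so that distinct vertices are adjacent iff their intervals meet. -/
def IsIntervalGraph {V : Type*} (G : SimpleGraph V) : Prop :=
  ∃ I : V → Set ℝ,
    (∀ v, ∃ a b : ℝ, a ≤ b ∧ I v = Set.Icc a b) ∧
    ∀ u v : V, u ≠ v → (G.Adj u v ↔ (I u ∩ I v).Nonempty)

/-- A co-interval graph is the complement of an interval graph. -/
def IsCoIntervalGraph {V : Type*} (G : SimpleGraph V) : Prop :=
  IsIntervalGraph Gᶜ

/-- `G` is a vertex-disjoint union of co-interval graphs: its vertex set can be
partitioned (here via the fibers of a map `c`) so that every edge joins two vertices of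
the same part and the restriction to each part is a co-interval graph. -/
def IsUnionCoIntervalGraph {V : Type u} (G : SimpleGraph V) : Prop :=
  ∃ (ι : Type u) (c : V → ι),
    (∀ u v : V, G.Adj u v → c u = c v) ∧
    ∀ i : ι, IsCoIntervalGraph (G.induce {v | c v = i})

/-- There is a covering of the edges of `Hᶜ` by finitely many subgraphs
`G 0, …, G (t-1)` of `Hᶜ`, each of which restricted to its non-isolated vertices is a
co-interval graph, such that every vertex is a non-isolated vertex of at most `s`
of them. -/
def LocalCoverLE {V : Type u} (H : SimpleGraph V) (s : ℕ) : Prop :=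
  ∃ (t : ℕ) (G : Fin t → SimpleGraph V),
    (∀ i, G i ≤ Hᶜ) ∧
    (∀ u v : V, Hᶜ.Adj u v → ∃ i, (G i).Adj u v) ∧
    (∀ i, IsCoIntervalGraph ((G i).induce (G i).support)) ∧
    ∀ v : V, {i : Fin t | v ∈ (G i).support}.ncard ≤ s

/-- The local boxicity of `H`. -/
noncomputable def localBoxicity {V : Type u} (H : SimpleGraph V) : ℕ :=
  sInf {s : ℕ | LocalCoverLE H s}

/-- The union boxicity of `H`: the least `k` such that `Hᶜ` is covered by `k`
subgraphs, each a vertex-disjoint union of co-interval graphs. -/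
noncomputable def unionBoxicity {V : Type u} (H : SimpleGraph V) : ℕ :=
  sInf {k : ℕ | ∃ G : Fin k → SimpleGraph V,
    (∀ i, G i ≤ Hᶜ) ∧
    (∀ u v : V, Hᶜ.Adj u v → ∃ i, (G i).Adj u v) ∧
    ∀ i, IsUnionCoIntervalGraph (G i)}

/-- The boxicity of `H`: the least `d` such that `H` is the intersection of `d`
interval graphs on its vertex set. -/
noncomputable def boxicity {V : Type u} (H : SimpleGraph V) : ℕ :=
  sInf {d : ℕ | ∃ G : Fin d → SimpleGraph V,
    (∀ i, IsIntervalGraph (G i)) ∧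
    ∀ u v : V, u ≠ v → (H.Adj u v ↔ ∀ i, (G i).Adj u v)}

section Helpers

variable {V : Type}

lemma box_inter_nonempty {d : ℕ} (A B : Fin d → Set ℝ) :
    ({p : Fin d → ℝ | ∀ j, p j ∈ A j} ∩ {p : Fin d → ℝ | ∀ j, p j ∈ B j}).Nonempty
      ↔ ∀ j, (A j ∩ B j).Nonempty := by
  constructor
  · rintro ⟨p, hA, hB⟩ j
    exact ⟨p j, hA j, hB j⟩
  · intro h
    exact ⟨fun j => (h j).choose, fun j => ((h j).choose_spec).1,
      fun j => ((h j).choose_spec).2⟩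

/-- membership in the defining set of unionBoxicity -/
def CoverK (H : SimpleGraph V) (k : ℕ) : Prop :=
  ∃ G : Fin k → SimpleGraph V,
    (∀ i, G i ≤ Hᶜ) ∧
    (∀ u v : V, Hᶜ.Adj u v → ∃ i, (G i).Adj u v) ∧
    ∀ i, IsUnionCoIntervalGraph (G i)

lemma bot_isUnion : IsUnionCoIntervalGraph (⊥ : SimpleGraph V) := by
  refine ⟨V, id, fun u v h => absurd h (by simp), fun i => ?_⟩
  refine ⟨fun _ => Set.Icc 0 0, fun _ => ⟨0, 0, le_refl _, rfl⟩, ?_⟩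
  rintro ⟨u, hu⟩ ⟨v, hv⟩ huv
  exact absurd (Subtype.ext (hu.trans hv.symm)) huv

lemma coverK_mono {H : SimpleGraph V} {m n : ℕ} (hmn : m ≤ n) (h : CoverK H m) :
    CoverK H n := by
  obtain ⟨G, h1, h2, h3⟩ := h
  refine ⟨fun i => if h : (i : ℕ) < m then G ⟨i, h⟩ else ⊥, fun i => ?_,
    fun u v huv => ?_, fun i => ?_⟩
  · dsimp only; split
    · exact h1 _
    · exact bot_le
  · obtain ⟨i, hi⟩ := h2 u v huv
    refine ⟨⟨i, lt_of_lt_of_le i.2 hmn⟩, ?_⟩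
    simpa [i.2] using hi
  · dsimp only; split
    · exact h3 _
    · exact bot_isUnion

/-- graph with single edge `a`-`b` (when `Hᶜ.Adj a b`), else empty -/
def pairGraph (H : SimpleGraph V) (a b : V) : SimpleGraph V where
  Adj u v := Hᶜ.Adj a b ∧ ((u = a ∧ v = b) ∨ (u = b ∧ v = a))
  symm := ⟨by rintro u v ⟨h1, h2⟩; exact ⟨h1, h2.symm.imp And.symm And.symm⟩⟩
  loopless := ⟨by rintro u ⟨h1, (⟨rfl, rfl⟩ | ⟨rfl, rfl⟩)⟩ <;> exact h1.ne rfl⟩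

lemma pairGraph_isUnion (H : SimpleGraph V) (a b : V) :
    IsUnionCoIntervalGraph (pairGraph H a b) := by
  classical
  by_cases hab : Hᶜ.Adj a b
  · refine ⟨Bool, fun v => if v = a ∨ v = b then true else false, ?_, ?_⟩
    · rintro u v ⟨h1, (⟨rfl, rfl⟩ | ⟨rfl, rfl⟩)⟩ <;> simp
    · intro β
      refine ⟨fun v => if (v : V) = a then Set.Icc 0 0 else Set.Icc 1 1,
        fun v => by dsimp only; split <;> exact ⟨_, _, le_refl _, rfl⟩, ?_⟩
      rintro ⟨u, hu⟩ ⟨v, hv⟩ huv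
      have huv' : u ≠ v := fun h => huv (Subtype.ext h)
      simp only [Set.mem_setOf_eq] at hu hv
      simp only [SimpleGraph.compl_adj, ne_eq, huv, not_false_iff, true_and,
        SimpleGraph.comap_adj, Function.Embedding.coe_subtype]
      cases β with
      | false =>
        have hu' : ¬(u = a ∨ u = b) := by intro h; simp [h] at hu
        have hv' : ¬(v = a ∨ v = b) := by intro h; simp [h] at hv
        push_neg at hu' hv'
        have : ¬(pairGraph H a b).Adj u v := by
          rintro ⟨h1, (⟨rfl, rfl⟩ | ⟨rfl, rfl⟩)⟩
          · exact hu'.1 rfl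
          · exact hu'.2 rfl
        simp only [this, not_false_iff, true_iff]
        rw [if_neg hu'.1, if_neg hv'.1]
        exact ⟨1, by simp⟩
      | true =>
        have hu' : u = a ∨ u = b := by by_contra h; simp [h] at hu
        have hv' : v = a ∨ v = b := by by_contra h; simp [h] at hv
        have hne : a ≠ b := hab.ne
        have hAdj : (pairGraph H a b).Adj u v := by
          rcases hu' with rfl | rfl <;> rcases hv' with rfl | rfl
          · exact absurd rfl huv'
          · exact ⟨hab, Or.inl ⟨rfl, rfl⟩⟩
          · exact ⟨hab, Or.inr ⟨rfl, rfl⟩⟩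
          · exact absurd rfl huv'
        simp only [hAdj, not_true_eq_false, false_iff]
        rintro ⟨x, hx1, hx2⟩
        rcases hu' with rfl | rfl <;> rcases hv' with rfl | rfl <;>
          first
            | exact huv' rfl
            | (simp only [if_pos rfl, if_neg hne, if_neg (Ne.symm hne),
                Set.mem_Icc] at hx1 hx2; linarith [hx1.1, hx1.2, hx2.1, hx2.2])
  · have : pairGraph H a b = ⊥ := by
      ext u v
      simp only [pairGraph, SimpleGraph.bot_adj, iff_false]
      rintro ⟨h1, -⟩
      exact hab h1
    rw [this]
    exact bot_isUnion

end Helpers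

section More
variable {V : Type}

lemma coverK_exists [Fintype V] (H : SimpleGraph V) : ∃ t, CoverK H t := by
  classical
  refine ⟨Fintype.card (V × V), ?_⟩
  set p : Fin (Fintype.card (V × V)) ≃ V × V := (Fintype.equivFin (V × V)).symm with hp
  refine ⟨fun i => pairGraph H (p i).1 (p i).2, ?_, ?_, fun i => pairGraph_isUnion H _ _⟩
  · rintro i u v ⟨h1, (⟨rfl, rfl⟩ | ⟨rfl, rfl⟩)⟩
    · exact h1
    · exact h1.symm
  · intro u v huv
    refine ⟨p.symm (u, v), ?_⟩
    refine ⟨?_, Or.inl ⟨?_, ?_⟩⟩ <;> simp [huv]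

lemma nonempty_J {J : Set ℝ} (hJ : J = Set.univ ∨ ∃ a b : ℝ, a ≤ b ∧ J = Set.Icc a b) :
    J.Nonempty := by
  rcases hJ with rfl | ⟨a, b, hab, rfl⟩
  · exact Set.univ_nonempty
  · exact Set.nonempty_Icc.mpr hab

lemma boxes_to_cover (H : SimpleGraph V) (k : ℕ)
    (hbox : ∃ d : Fin k → ℕ, (∀ i, 0 < d i) ∧
      ∃ J : V → (i : Fin k) → Fin (d i) → Set ℝ,
        (∀ (v : V) (i : Fin k) (j : Fin (d i)),
          J v i j = Set.univ ∨ ∃ a b : ℝ, a ≤ b ∧ J v i j = Set.Icc a b) ∧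
        (∀ (v : V) (i : Fin k), {j : Fin (d i) | J v i j ≠ Set.univ}.ncard ≤ 1) ∧
        ∀ u v : V, u ≠ v → (H.Adj u v ↔ ∀ i : Fin k,
          ({p : Fin (d i) → ℝ | ∀ j, p j ∈ J u i j} ∩
           {p : Fin (d i) → ℝ | ∀ j, p j ∈ J v i j}).Nonempty)) :
    CoverK H k := by
  classical
  obtain ⟨d, hd, J, hJ, hJ1, hAdj⟩ := hbox
  -- the boxes
  set B : (i : Fin k) → V → Set (Fin (d i) → ℝ) :=
    fun i v => {p | ∀ j, p j ∈ J v i j} with hB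
  have hBbox : ∀ (i : Fin k) (u v : V),
      (B i u ∩ B i v).Nonempty ↔ ∀ j, (J u i j ∩ J v i j).Nonempty :=
    fun i u v => box_inter_nonempty _ _
  have hJne : ∀ (v : V) (i : Fin k) (j : Fin (d i)), (J v i j).Nonempty :=
    fun v i j => nonempty_J (hJ v i j)
  have huniq : ∀ (v : V) (i : Fin k) (j j' : Fin (d i)),
      J v i j ≠ Set.univ → J v i j' ≠ Set.univ → j = j' := by
    intro v i j j' h h'
    exact (Set.ncard_le_one (Set.toFinite _)).mp (hJ1 v i) j h j' h'
  -- the graphs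
  set G : Fin k → SimpleGraph V := fun i =>
    { Adj := fun u v => u ≠ v ∧ ¬(B i u ∩ B i v).Nonempty,
      symm := ⟨by rintro u v ⟨h1, h2⟩; exact ⟨h1.symm, by rwa [Set.inter_comm]⟩⟩,
      loopless := ⟨fun v h => h.1 rfl⟩ } with hG
  have hGad : ∀ (i : Fin k) (u v : V),
      (G i).Adj u v ↔ (u ≠ v ∧ ¬(B i u ∩ B i v).Nonempty) := fun i u v => Iff.rfl
  -- the class map
  set c : (i : Fin k) → V → Option (Fin (d i)) := fun i v =>
    if h : ∃ j, J v i j ≠ Set.univ then some h.choose else none with hc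
  have hc_some : ∀ (i : Fin k) (v : V) (j : Fin (d i)),
      J v i j ≠ Set.univ → c i v = some j := by
    intro i v j hj
    have h : ∃ j, J v i j ≠ Set.univ := ⟨j, hj⟩
    simp only [hc, dif_pos h]
    exact congrArg some (huniq v i h.choose j h.choose_spec hj)
  have hc_univ : ∀ (i : Fin k) (v : V) (j : Fin (d i)),
      c i v ≠ some j → J v i j = Set.univ := by
    intro i v j hj
    by_contra h
    exact hj (hc_some i v j h)
  have hc_none : ∀ (i : Fin k) (v : V), c i v = none → ∀ j, J v i j = Set.univ := by
    intro i v hv j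
    exact hc_univ i v j (by rw [hv]; simp)
  have hBuniv : ∀ (i : Fin k) (v : V), c i v = none → B i v = Set.univ := by
    intro i v hv
    ext p
    simp only [hB, Set.mem_setOf_eq, Set.mem_univ, iff_true]
    intro j
    rw [hc_none i v hv j]
    trivial
  refine ⟨G, ?_, ?_, ?_⟩
  · rintro i u v ⟨h1, h2⟩
    rw [SimpleGraph.compl_adj]
    refine ⟨h1, fun hH => ?_⟩
    exact h2 (((hAdj u v h1).mp hH) i)
  · intro u v huv
    rw [SimpleGraph.compl_adj] at huv
    obtain ⟨h1, h2⟩ := huv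
    have h3 := (hAdj u v h1).not.mp h2
    rw [not_forall] at h3
    obtain ⟨i, hi⟩ := h3
    exact ⟨i, h1, hi⟩
  · intro i
    refine ⟨Option (Fin (d i)), c i, ?_, ?_⟩
    · rintro u v ⟨h1, h2⟩
      rw [hBbox i u v, not_forall] at h2
      obtain ⟨j, hj⟩ := h2
      have hju : J u i j ≠ Set.univ := by
        intro h
        rw [h, Set.univ_inter] at hj
        exact hj (hJne v i j)
      have hjv : J v i j ≠ Set.univ := by
        intro h
        rw [h, Set.inter_univ] at hj
        exact hj (hJne u i j)
      rw [hc_some i u j hju, hc_some i v j hjv]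
    · intro β
      match β with
      | none =>
        refine ⟨fun _ => Set.Icc 0 0, fun _ => ⟨0, 0, le_refl _, rfl⟩, ?_⟩
        rintro ⟨u, hu⟩ ⟨v, hv⟩ huv
        have huv' : u ≠ v := fun h => huv (Subtype.ext h)
        simp only [Set.mem_setOf_eq] at hu hv
        simp only [SimpleGraph.compl_adj, ne_eq, huv, not_false_iff, true_and,
          SimpleGraph.comap_adj, Function.Embedding.coe_subtype]
        constructor
        · intro _; exact ⟨0, by simp⟩
        · intro _
          rintro ⟨-, h2⟩
          apply h2
          rw [hBuniv i u hu, hBuniv i v hv, Set.univ_inter]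
          exact Set.univ_nonempty
      | some j =>
        refine ⟨fun v => J (v : V) i j, ?_, ?_⟩
        · rintro ⟨v, hv⟩
          simp only [Set.mem_setOf_eq] at hv
          have hvne : J v i j ≠ Set.univ := by
            intro hju
            by_cases h : ∃ j', J v i j' ≠ Set.univ
            · have h1 : c i v = some h.choose := by simp only [hc, dif_pos h]
              rw [hv] at h1
              have h2 := Option.some_injective _ h1
              exact h.choose_spec (h2 ▸ hju)
            · have h1 : c i v = none := by simp only [hc, dif_neg h]
              rw [hv] at h1
              exact Option.some_ne_none _ h1
          rcases hJ v i j with h' | h'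
          · exact absurd h' hvne
          · exact h'
        · rintro ⟨u, hu⟩ ⟨v, hv⟩ huv
          have huv' : u ≠ v := fun h => huv (Subtype.ext h)
          simp only [Set.mem_setOf_eq] at hu hv
          simp only [SimpleGraph.compl_adj, ne_eq, huv, not_false_iff, true_and,
            SimpleGraph.comap_adj, Function.Embedding.coe_subtype]
          have huj : ∀ j' , j' ≠ j → J u i j' = Set.univ := by
            intro j' hj'
            refine hc_univ i u j' (fun h => hj' ?_)
            rw [hu] at h
            exact (Option.some_injective _ h.symm)
          show ¬(G i).Adj u v ↔ _
          rw [hGad]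
          constructor
          · intro h
            have hne : (B i u ∩ B i v).Nonempty := by
              by_contra h'
              exact h ⟨huv', h'⟩
            exact (hBbox i u v).mp hne j
          · intro h hadj
            apply hadj.2
            rw [hBbox i u v]
            intro j'
            by_cases hj' : j' = j
            · subst hj'; exact h
            · rw [huj j' hj', Set.univ_inter]
              exact hJne v i j'
end More

section Forward
variable {V : Type}

lemma cover_to_boxes [Fintype V] (H : SimpleGraph V) (k : ℕ) (hcov : CoverK H k) :
    ∃ d : Fin k → ℕ, (∀ i, 0 < d i) ∧
      ∃ J : V → (i : Fin k) → Fin (d i) → Set ℝ,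
        (∀ (v : V) (i : Fin k) (j : Fin (d i)),
          J v i j = Set.univ ∨ ∃ a b : ℝ, a ≤ b ∧ J v i j = Set.Icc a b) ∧
        (∀ (v : V) (i : Fin k), {j : Fin (d i) | J v i j ≠ Set.univ}.ncard ≤ 1) ∧
        ∀ u v : V, u ≠ v → (H.Adj u v ↔ ∀ i : Fin k,
          ({p : Fin (d i) → ℝ | ∀ j, p j ∈ J u i j} ∩
           {p : Fin (d i) → ℝ | ∀ j, p j ∈ J v i j}).Nonempty) := by
  classical
  obtain ⟨G, hle, hcv, hU⟩ := hcov
  choose ι c hc hco using hU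
  have hco' : ∀ (i : Fin k) (α : ι i),
      ∃ I : {v | c i v = α} → Set ℝ,
        (∀ v, ∃ a b : ℝ, a ≤ b ∧ I v = Set.Icc a b) ∧
        ∀ u v : {v | c i v = α}, u ≠ v →
          (((G i).induce {v | c i v = α})ᶜ.Adj u v ↔ (I u ∩ I v).Nonempty) := hco
  choose I hIcc hIadj using hco'
  set n := Fintype.card V with hn
  set e := Fintype.equivFin V with he
  -- class index
  have hmem : ∀ (i : Fin k) (v : V),
      e v ∈ (Finset.univ.filter fun w => c i w = c i v).image e :=
    fun i v => Finset.mem_image_of_mem e (Finset.mem_filter.mpr ⟨Finset.mem_univ v, rfl⟩)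
  set cls : Fin k → V → Fin n := fun i v =>
    ((Finset.univ.filter fun w => c i w = c i v).image e).min' ⟨e v, hmem i v⟩ with hclsdef
  have hcls : ∀ (i : Fin k) (u v : V), cls i u = cls i v ↔ c i u = c i v := by
    intro i u v
    constructor
    · intro h
      obtain ⟨w, hw, hew⟩ := Finset.mem_image.mp (Finset.min'_mem _ ⟨e u, hmem i u⟩)
      obtain ⟨w', hw', hew'⟩ := Finset.mem_image.mp (Finset.min'_mem _ ⟨e v, hmem i v⟩)
      have : w = w' := e.injective (by rw [hew, hew']; exact h)
      rw [← (Finset.mem_filter.mp hw).2, this, (Finset.mem_filter.mp hw').2]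
    · intro h
      have hs : (Finset.univ.filter fun w => c i w = c i u)
          = (Finset.univ.filter fun w => c i w = c i v) := by
        apply Finset.filter_congr
        intro w _
        rw [h]
      simp only [hclsdef, hs]
  -- the intervals
  set Iv : Fin k → V → Set ℝ := fun i v => I i (c i v) ⟨v, rfl⟩ with hIv
  have hItrans : ∀ (i : Fin k) (u v : V) (h : c i u = c i v),
      Iv i u = I i (c i v) ⟨u, h⟩ := by
    intro i u v h
    have key : ∀ (α : ι i) (h : c i u = α), I i (c i u) ⟨u, rfl⟩ = I i α ⟨u, h⟩ := by
      rintro α rfl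
      rfl
    exact key (c i v) h
  refine ⟨fun _ => n + 1, fun _ => Nat.succ_pos n,
    fun v i j => if j = (cls i v).castSucc then Iv i v else Set.univ, ?_, ?_, ?_⟩
  · intro v i j
    dsimp only
    split
    · right
      exact hIcc i (c i v) ⟨v, rfl⟩
    · left; rfl
  · intro v i
    have hsub : {j : Fin (n + 1) |
        (if j = (cls i v).castSucc then Iv i v else Set.univ) ≠ Set.univ}
        ⊆ {(cls i v).castSucc} := by
      intro j hj
      simp only [Set.mem_setOf_eq] at hj
      by_contra h
      simp only [Set.mem_singleton_iff] at h
      rw [if_neg h] at hj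
      exact hj rfl
    calc _ ≤ ({(cls i v).castSucc} : Set (Fin (n+1))).ncard :=
          Set.ncard_le_ncard hsub (Set.finite_singleton _)
      _ = 1 := Set.ncard_singleton _
  · intro u v huv
    have key : H.Adj u v ↔ ∀ i, ¬(G i).Adj u v := by
      constructor
      · intro h i hGi
        exact ((hle i hGi).2) h
      · intro h
        by_contra hH
        obtain ⟨i, hi⟩ := hcv u v ((SimpleGraph.compl_adj H u v).mpr ⟨huv, hH⟩)
        exact h i hi
    rw [key]
    apply forall_congr'
    intro i
    beta_reduce
    by_cases hcc : c i u = c i v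
    · -- same class
      have hcls' : cls i u = cls i v := (hcls i u v).mpr hcc
      have hne : (⟨u, hcc⟩ : {w | c i w = c i v}) ≠ ⟨v, rfl⟩ :=
        fun h => huv (congrArg Subtype.val h)
      have hadj := hIadj i (c i v) ⟨u, hcc⟩ ⟨v, rfl⟩ hne
      rw [SimpleGraph.compl_adj] at hadj
      simp only [SimpleGraph.comap_adj, Function.Embedding.coe_subtype] at hadj
      have hadj2 : ¬(G i).Adj u v ↔ (Iv i u ∩ Iv i v).Nonempty := by
        rw [hItrans i u v hcc]
        constructor
        · intro h
          exact hadj.mp ⟨hne, h⟩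
        · intro h hG
          exact (hadj.mpr h).2 hG
      rw [hadj2, box_inter_nonempty]
      constructor
      · intro h j
        rw [hcls']
        by_cases hj : j = (cls i v).castSucc
        · rw [if_pos hj, if_pos hj]
          exact h
        · rw [if_neg hj, if_neg hj, Set.univ_inter]
          exact Set.univ_nonempty
      · intro h
        have h2 := h (cls i u).castSucc
        rw [hcls'] at h2
        rw [if_pos rfl, if_pos rfl] at h2
        exact h2
    · -- different classes
      have h1 : ¬(G i).Adj u v := fun h => hcc (hc i u v h)
      simp only [h1, not_false_iff, true_iff]
      rw [box_inter_nonempty]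
      intro j
      have hclsne : cls i u ≠ cls i v := fun h => hcc ((hcls i u v).mp h)
      have hIne : ∀ w, (Iv i w).Nonempty := by
        intro w
        obtain ⟨a, b, hab, hI⟩ := hIcc i (c i w) ⟨w, rfl⟩
        rw [hIv]
        dsimp only
        rw [hI]
        exact Set.nonempty_Icc.mpr hab
      by_cases hju : j = (cls i u).castSucc
      · have hjv : j ≠ (cls i v).castSucc := by
          rw [hju]
          exact fun h => hclsne (Fin.castSucc_injective n h)
        rw [if_pos hju, if_neg hjv, Set.inter_univ]
        exact hIne u
      · rw [if_neg hju, Set.univ_inter]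
        by_cases hjv : j = (cls i v).castSucc
        · rw [if_pos hjv]; exact hIne v
        · rw [if_neg hjv]; exact Set.univ_nonempty

end Forward

/-- `ūbox(H) ≤ k` iff there are dimensions `d 0, …, d (k-1)` and for
each vertex `v` boxes `B i v ⊆ ℝ^(d i)` (for `i = 0, …, k-1`), each a product of factors
which are all of `ℝ` or nonempty closed bounded intervals with at most one factor
different from `ℝ` (i.e. each box is 1-local), such that two distinct vertices `u, v`
are adjacent in `H` iff `B i u ∩ B i v ≠ ∅` for every `i`. -/
theorem stmt_16 {V : Type} [Fintype V] (H : SimpleGraph V) (k : ℕ) (hk : 0 < k) :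
    unionBoxicity H ≤ k ↔
    ∃ d : Fin k → ℕ, (∀ i, 0 < d i) ∧
      ∃ J : V → (i : Fin k) → Fin (d i) → Set ℝ,
        (∀ (v : V) (i : Fin k) (j : Fin (d i)),
          J v i j = Set.univ ∨ ∃ a b : ℝ, a ≤ b ∧ J v i j = Set.Icc a b) ∧
        (∀ (v : V) (i : Fin k), {j : Fin (d i) | J v i j ≠ Set.univ}.ncard ≤ 1) ∧
        ∀ u v : V, u ≠ v → (H.Adj u v ↔ ∀ i : Fin k,
          ({p : Fin (d i) → ℝ | ∀ j, p j ∈ J u i j} ∩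
           {p : Fin (d i) → ℝ | ∀ j, p j ∈ J v i j}).Nonempty) := by
  constructor
  · intro h
    apply cover_to_boxes H k
    obtain ⟨t, ht⟩ := coverK_exists H
    have hne : {m : ℕ | CoverK H m}.Nonempty := ⟨t, ht⟩
    have hmem : CoverK H (sInf {m : ℕ | CoverK H m}) := Nat.sInf_mem hne
    have hle : sInf {m : ℕ | CoverK H m} ≤ k := h
    exact coverK_mono hle hmem
  · intro h
    exact Nat.sInf_le (boxes_to_cover H k h)
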